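/- (Bekić, 2×2 case) Let C be a Chomsky algebra, σ : T X → C an interpretation, x ≠ y variables, and p, q ∈ T X. Define the terms b₀ = μy.(q[x := μx.p]) and a₀ = (μx.p)[y := b₀]. Then (σ(a₀), σ(b₀)) is the least pair (a, b) ∈ C × C (in the componentwise order) satisfying σ[x↦a][y↦b](p) ≤ a and σ[x↦a][y↦b](q) ≤ b. -/

import Mathlib

/-- μ-expressions over a set `X` of variables:
`t ::= x | t + t | t·t | 0 | 1 | μx.t`. -/
inductive MuTerm (X : Type) : Type
  | var : X → MuTerm X
  | zero : MuTerm X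
  | one : MuTerm X
  | add : MuTerm X → MuTerm X → MuTerm X
  | mul : MuTerm X → MuTerm X → MuTerm X
  | mu : X → MuTerm X → MuTerm X

namespace MuTerm

variable {X : Type}

/-- Size of a term (used for termination of substitution). -/
def size : MuTerm X → ℕ
  | var _ => 1
  | zero => 1
  | one => 1
  | add s t => size s + size t + 1
  | mul s t => size s + size t + 1
  | mu _ t => size t + 1

variable [DecidableEq X]

/-- Free variables of a μ-expression. -/
def fv : MuTerm X → Finset X
  | var x => {x}
  | zero => ∅
  | one => ∅
  | add s t => fv s ∪ fv t
  | mul s t => fv s ∪ fv t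
  | mu x t => fv t \ {x}

/-- All (free and bound) variables of a μ-expression. -/
def vars : MuTerm X → Finset X
  | var x => {x}
  | zero => ∅
  | one => ∅
  | add s t => vars s ∪ vars t
  | mul s t => vars s ∪ vars t
  | mu x t => insert x (vars t)

/-- Rename free occurrences of the variable `y` to `z`. -/
def rename (y z : X) : MuTerm X → MuTerm X
  | var x => if x = y then var z else var x
  | zero => zero
  | one => one
  | add s t => add (rename y z s) (rename y z t)
  | mul s t => mul (rename y z s) (rename y z t)
  | mu x t => if x = y then mu x t else mu x (rename y z t)

theorem size_rename (y z : X) : ∀ t : MuTerm X, (rename y z t).size = t.size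
  | var x => by simp only [rename]; split <;> rfl
  | zero => rfl
  | one => rfl
  | add s t => by simp [rename, size, size_rename y z s, size_rename y z t]
  | mul s t => by simp [rename, size, size_rename y z s, size_rename y z t]
  | mu x t => by
      simp only [rename]; split
      · rfl
      · simp [size, size_rename y z t]

variable [Infinite X]

/-- Capture-avoiding substitution `t[x := u]`: substitute `u` for the free
occurrences of `x` in the last argument, renaming bound variables to fresh
ones to avoid capture. -/
noncomputable def subst (x : X) (u : MuTerm X) : MuTerm X → MuTerm X
  | var y => if y = x then u else var y
  | zero => zero
  | one => one
  | add s t => add (subst x u s) (subst x u t)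
  | mul s t => mul (subst x u s) (subst x u t)
  | mu y t =>
    if y = x then mu y t
    else
      let z : X := Classical.choose (Infinite.exists_notMem_finset (vars t ∪ fv u ∪ {x}))
      mu z (subst x u (rename y z t))
  termination_by t => size t
  decreasing_by
    all_goals simp only [size, size_rename]
    all_goals omega

/-- The `n`-th approximant `nx.t`: `0x.t = 0`, `(n+1)x.t = t[x := nx.t]`. -/
noncomputable def napprox : ℕ → X → MuTerm X → MuTerm X
  | 0, _, _ => zero
  | n + 1, x, t => subst x (napprox n x t) t

end MuTerm

/-- Polynomial functions over a semiring `C` in `n` indeterminates: functions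
built from constants in `C`, projections, addition, and multiplication. -/
inductive IsPolyFun {C : Type} [Semiring C] : {n : ℕ} → ((Fin n → C) → C) → Prop
  | const {n : ℕ} (c : C) : IsPolyFun fun _ : Fin n → C => c
  | proj {n : ℕ} (i : Fin n) : IsPolyFun fun v => v i
  | add {n : ℕ} {p q : (Fin n → C) → C} :
      IsPolyFun p → IsPolyFun q → IsPolyFun fun v => p v + q v
  | mul {n : ℕ} {p q : (Fin n → C) → C} :
      IsPolyFun p → IsPolyFun q → IsPolyFun fun v => p v * q v

/-- A Chomsky algebra is an idempotent semiring (ordered by `a ≤ b ↔ a + b = b`)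
in which every finite system of polynomial inequalities `pᵢ ≤ xᵢ` has a least
solution. -/
class ChomskyAlgebra (C : Type) extends IdemSemiring C where
  algClosed : ∀ {n : ℕ} (p : Fin n → (Fin n → C) → C), (∀ i, IsPolyFun (p i)) →
    ∃ sol : Fin n → C, (∀ i, p i sol ≤ sol i) ∧
      ∀ τ : Fin n → C, (∀ i, p i τ ≤ τ i) → ∀ i, sol i ≤ τ i

/-- `IsInterp eval` says that `eval` is the family of interpretations of
μ-expressions over the Chomsky algebra `C`, one for each valuation `v : X → C`:
each `eval v` is a homomorphism with respect to the semiring operations, and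
`eval v (μx.t)` is the least `a` with `eval v[x↦a] t ≤ a`. -/
structure IsInterp {X C : Type} [DecidableEq X] [Infinite X] [ChomskyAlgebra C]
    (eval : (X → C) → MuTerm X → C) : Prop where
  var : ∀ (v : X → C) (x : X), eval v (.var x) = v x
  zero : ∀ v, eval v .zero = 0
  one : ∀ v, eval v .one = 1
  add : ∀ v s t, eval v (.add s t) = eval v s + eval v t
  mul : ∀ v s t, eval v (.mul s t) = eval v s * eval v t
  mu : ∀ (v : X → C) (x : X) (t : MuTerm X),
    IsLeast {a : C | eval (Function.update v x a) t ≤ a} (eval v (.mu x t))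

/-- A Chomsky algebra `C` is μ-continuous if for every interpretation `σ` over
`C`, all `c, d ∈ C`, and every term `t`,
`c·σ(μx.t)·d = sup_{n ≥ 0} c·σ(nx.t)·d` (in particular the supremum exists). -/
def MuContinuous (C : Type) [ChomskyAlgebra C] : Prop :=
  ∀ (X : Type) [DecidableEq X] [Infinite X] (eval : (X → C) → MuTerm X → C),
    IsInterp eval → ∀ (v : X → C) (c d : C) (x : X) (t : MuTerm X),
      IsLUB (Set.range fun n : ℕ => c * eval v (MuTerm.napprox n x t) * d)
        (c * eval v (.mu x t) * d)

/-- A language interpretation `τ : T X → P(Y*)`: a homomorphism for the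
semiring operations on languages with `τ(μx.t) = ⋃ n, τ(nx.t)`. -/
structure IsLangInterp {X Y : Type} [DecidableEq X] [Infinite X]
    (τ : MuTerm X → Language Y) : Prop where
  zero : τ .zero = 0
  one : τ .one = 1
  add : ∀ s t, τ (.add s t) = τ s + τ t
  mul : ∀ s t, τ (.mul s t) = τ s * τ t
  mu : ∀ (x : X) (t : MuTerm X), τ (.mu x t) = ⨆ n : ℕ, τ (MuTerm.napprox n x t)

/-- The canonical interpretation `L_X : T X → P(X*)`: the language
interpretation with `L_X(x) = {x}`. -/
def IsCanonicalInterp {X : Type} [DecidableEq X] [Infinite X]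
    (L : MuTerm X → Language X) : Prop :=
  IsLangInterp L ∧ ∀ x : X, L (.var x) = {[x]}

/-- For a word `w = x₁⋯x_k ∈ X*` and `σ : X → K`, `wordProd σ w` is the
product `σ(x₁)⋯σ(x_k)` in `K`, with the empty word mapped to `1`. -/
def wordProd {X K : Type} [Monoid K] (σ : X → K) (w : List X) : K :=
  (w.map σ).prod

/-- `IsLangEval E` says that `E` is the family of structurally induced language
interpretations, one for each assignment `σ : X → P(Y*)` of languages to
variables: each `E σ` is a homomorphism for the semiring operations on
languages, with `E σ (μx.t) = ⋃ n, E σ (nx.t)`. -/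
structure IsLangEval {X Y : Type} [DecidableEq X] [Infinite X]
    (E : (X → Language Y) → MuTerm X → Language Y) : Prop where
  var : ∀ (σ : X → Language Y) (x : X), E σ (.var x) = σ x
  zero : ∀ σ, E σ .zero = 0
  one : ∀ σ, E σ .one = 1
  add : ∀ σ s t, E σ (.add s t) = E σ s + E σ t
  mul : ∀ σ s t, E σ (.mul s t) = E σ s * E σ t
  mu : ∀ (σ : X → Language Y) (x : X) (t : MuTerm X),
    E σ (.mu x t) = ⨆ n : ℕ, E σ (MuTerm.napprox n x t)

section Aux

open MuTerm Function

variable {X C : Type} [DecidableEq X] [Infinite X] [ChomskyAlgebra C]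
variable {eval : (X → C) → MuTerm X → C}

theorem fv_subset_vars : ∀ t : MuTerm X, t.fv ⊆ t.vars := by
  intro t
  induction t with
  | var z => simp [MuTerm.fv, MuTerm.vars]
  | zero => simp [MuTerm.fv, MuTerm.vars]
  | one => simp [MuTerm.fv, MuTerm.vars]
  | add s t ihs iht =>
      simp only [MuTerm.fv, MuTerm.vars]
      exact Finset.union_subset_union ihs iht
  | mul s t ihs iht =>
      simp only [MuTerm.fv, MuTerm.vars]
      exact Finset.union_subset_union ihs iht
  | mu x t ih =>
      simp only [MuTerm.fv, MuTerm.vars]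
      exact (Finset.sdiff_subset).trans (ih.trans (Finset.subset_insert x _))

/-- The interpretation only depends on the values of free variables. -/
theorem eval_congr (h : IsInterp eval) :
    ∀ (t : MuTerm X) (v w : X → C), (∀ z ∈ t.fv, v z = w z) → eval v t = eval w t := by
  intro t
  induction t with
  | var z => intro v w hvw; rw [h.var, h.var, hvw z (by simp [fv])]
  | zero => intro v w _; rw [h.zero, h.zero]
  | one => intro v w _; rw [h.one, h.one]
  | add s t ihs iht =>
      intro v w hvw
      rw [h.add, h.add, ihs v w (fun z hz => hvw z (by simp [fv, hz])),
        iht v w (fun z hz => hvw z (by simp [fv, hz]))]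
  | mul s t ihs iht =>
      intro v w hvw
      rw [h.mul, h.mul, ihs v w (fun z hz => hvw z (by simp [fv, hz])),
        iht v w (fun z hz => hvw z (by simp [fv, hz]))]
  | mu x t ih =>
      intro v w hvw
      have hset : {a : C | eval (update v x a) t ≤ a} = {a : C | eval (update w x a) t ≤ a} := by
        ext a
        simp only [Set.mem_setOf_eq]
        rw [ih (update v x a) (update w x a) ?_]
        intro z hz
        by_cases hzx : z = x
        · subst hzx; simp
        · simp only [update_apply, if_neg hzx]
          exact hvw z (by simp [fv]; exact ⟨hz, hzx⟩)
      exact (h.mu v x t).unique (hset ▸ h.mu w x t)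

/-- The interpretation is monotone in the valuation. -/
theorem eval_mono (h : IsInterp eval) :
    ∀ (t : MuTerm X) (v w : X → C), (∀ z, v z ≤ w z) → eval v t ≤ eval w t := by
  intro t
  induction t with
  | var z => intro v w hvw; rw [h.var, h.var]; exact hvw z
  | zero => intro v w _; rw [h.zero, h.zero]
  | one => intro v w _; rw [h.one, h.one]
  | add s t ihs iht =>
      intro v w hvw
      rw [h.add, h.add]; exact add_le_add (ihs v w hvw) (iht v w hvw)
  | mul s t ihs iht =>
      intro v w hvw
      rw [h.mul, h.mul]; exact mul_le_mul' (ihs v w hvw) (iht v w hvw)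
  | mu x t ih =>
      intro v w hvw
      refine (h.mu v x t).2 ?_
      have hw := (h.mu w x t).1
      refine le_trans (ih _ _ ?_) hw
      intro z
      by_cases hzx : z = x
      · subst hzx; simp
      · simp only [update_apply, if_neg hzx]; exact hvw z

/-- Renaming to a totally fresh variable. -/
theorem eval_rename (h : IsInterp eval) :
    ∀ (t : MuTerm X) (y z : X) (v : X → C), z ∉ t.vars →
      eval v (rename y z t) = eval (update v y (v z)) t := by
  intro t
  induction t with
  | var w =>
      intro y z v hz
      simp only [rename]
      by_cases hwy : w = y
      · subst hwy; simp [h.var]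
      · simp only [if_neg hwy, h.var, update_apply, if_neg hwy]
  | zero => intro y z v _; rw [rename, h.zero, h.zero]
  | one => intro y z v _; rw [rename, h.one, h.one]
  | add s t ihs iht =>
      intro y z v hz
      rw [rename, h.add, h.add, ihs y z v (fun hh => hz (by simp [vars, hh])),
        iht y z v (fun hh => hz (by simp [vars, hh]))]
  | mul s t ihs iht =>
      intro y z v hz
      rw [rename, h.mul, h.mul, ihs y z v (fun hh => hz (by simp [vars, hh])),
        iht y z v (fun hh => hz (by simp [vars, hh]))]
  | mu x t ih =>
      intro y z v hz
      have hzx : z ≠ x := fun hh => hz (by simp [vars, hh])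
      have hzt : z ∉ t.vars := fun hh => hz (by simp [vars, hh])
      simp only [rename]
      by_cases hxy : x = y
      · simp only [if_pos hxy]
        refine eval_congr h _ v (update v y (v z)) ?_
        intro w hw
        have hwy : w ≠ y := by
          subst hxy
          simp [fv] at hw
          exact hw.2
        simp [update_apply, if_neg hwy]
      · simp only [if_neg hxy]
        have hset : {a : C | eval (update v x a) (rename y z t) ≤ a}
            = {a : C | eval (update (update v y (v z)) x a) t ≤ a} := by
          ext a
          simp only [Set.mem_setOf_eq]
          rw [ih y z (update v x a) hzt]
          have : update (update v x a) y ((update v x a) z)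
              = update (update v y (v z)) x a := by
            rw [update_apply, if_neg hzx, update_comm (fun hh => hxy hh.symm)]
          rw [this]
        exact (hset ▸ h.mu v x (rename y z t)).unique (h.mu (update v y (v z)) x t)

/-- The substitution lemma. -/
theorem eval_subst_aux (h : IsInterp eval) :
    ∀ (n : ℕ) (t : MuTerm X), t.size ≤ n → ∀ (u : MuTerm X) (x : X) (v : X → C),
      eval v (subst x u t) = eval (update v x (eval v u)) t := by
  intro n
  induction n with
  | zero => intro t ht; cases t <;> simp [MuTerm.size] at ht
  | succ n ihn =>
    intro t ht u x v
    cases t with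
    | var w =>
        rw [subst]
        by_cases hwx : w = x
        · subst hwx; simp [h.var]
        · simp [if_neg hwx, h.var, update_apply, hwx]
    | zero => rw [subst, h.zero, h.zero]
    | one => rw [subst, h.one, h.one]
    | add s t =>
        have hs : s.size ≤ n := by simp [MuTerm.size] at ht; omega
        have htt : t.size ≤ n := by simp [MuTerm.size] at ht; omega
        rw [subst, h.add, h.add, ihn s hs u x v, ihn t htt u x v]
    | mul s t =>
        have hs : s.size ≤ n := by simp [MuTerm.size] at ht; omega
        have htt : t.size ≤ n := by simp [MuTerm.size] at ht; omega
        rw [subst, h.mul, h.mul, ihn s hs u x v, ihn t htt u x v]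
    | mu w t =>
        have htn : t.size ≤ n := by simp [MuTerm.size] at ht; omega
        rw [subst]
        by_cases hwx : w = x
        · simp only [if_pos hwx]
          subst hwx
          refine eval_congr h _ v (update v w (eval v u)) ?_
          intro z hz
          have hzw : z ≠ w := by simp [fv] at hz; exact hz.2
          simp [update_apply, if_neg hzw]
        · simp only [if_neg hwx]
          set z : X := Classical.choose (Infinite.exists_notMem_finset (vars t ∪ fv u ∪ {x}))
            with hzdef
          have hzspec := Classical.choose_spec
            (Infinite.exists_notMem_finset (vars t ∪ fv u ∪ {x}))
          rw [← hzdef] at hzspec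
          simp only [Finset.mem_union, Finset.mem_singleton, not_or] at hzspec
          obtain ⟨⟨hzt, hzu⟩, hzx⟩ := hzspec
          have hset : {a : C | eval (update v z a) (subst x u (rename w z t)) ≤ a}
              = {a : C | eval (update (update v x (eval v u)) w a) t ≤ a} := by
            ext a
            simp only [Set.mem_setOf_eq]
            rw [ihn (rename w z t) (by rw [MuTerm.size_rename]; exact htn) u x (update v z a)]
            have hu : eval (update v z a) u = eval v u := by
              refine eval_congr h u _ _ ?_
              intro zz hzz
              have : zz ≠ z := fun hh => hzu (hh ▸ hzz)
              simp [update_apply, if_neg this]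
            rw [hu, eval_rename h t w z _ hzt]
            have haux : (update (update v z a) x (eval v u)) z = a := by
              rw [update_apply, if_neg hzx, update_self]
            rw [haux]
            constructor <;> intro hle <;> refine le_trans (le_of_eq ?_) hle <;>
              refine eval_congr h t _ _ ?_ <;> intro zz hzz <;>
              · have hzzz : zz ≠ z := fun hh => hzt (hh ▸ (fv_subset_vars t hzz))
                by_cases h1 : zz = w
                · subst h1; simp [update_apply, if_neg hwx, if_neg hzzz, hzx]
                · by_cases h2 : zz = x
                  · subst h2; simp [update_apply, if_neg h1, if_neg hzzz,
                      fun hh => hzx hh]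
                  · simp [update_apply, if_neg h1, if_neg h2, if_neg hzzz]
          exact (hset ▸ h.mu v z (subst x u (rename w z t))).unique
            (h.mu (update v x (eval v u)) w t)

theorem eval_subst (h : IsInterp eval) (t u : MuTerm X) (x : X) (v : X → C) :
    eval v (subst x u t) = eval (update v x (eval v u)) t :=
  eval_subst_aux h t.size t le_rfl u x v

end Aux

/-- Bekić, 2×2 case: with `b₀ = μy.(q[x := μx.p])` and
`a₀ = (μx.p)[y := b₀]`, the pair `(σ(a₀), σ(b₀))` is the least pair `(a, b)`
with `σ[x↦a][y↦b](p) ≤ a` and `σ[x↦a][y↦b](q) ≤ b`. -/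
theorem statement15 {X C : Type} [DecidableEq X] [Infinite X] [ChomskyAlgebra C]
    (eval : (X → C) → MuTerm X → C) (h : IsInterp eval) (v : X → C)
    (x y : X) (hxy : x ≠ y) (p q : MuTerm X) :
    IsLeast {ab : C × C |
        eval (Function.update (Function.update v x ab.1) y ab.2) p ≤ ab.1 ∧
        eval (Function.update (Function.update v x ab.1) y ab.2) q ≤ ab.2}
      (eval v (MuTerm.subst y (.mu y (MuTerm.subst x (.mu x p) q)) (.mu x p)),
       eval v (.mu y (MuTerm.subst x (.mu x p) q))) := by
  set q' : MuTerm X := MuTerm.subst x (.mu x p) q with hq'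
  set b₀ : C := eval v (.mu y q') with hb₀
  set a₀ : C := eval v (MuTerm.subst y (.mu y q') (.mu x p)) with ha₀
  have ha₀' : a₀ = eval (Function.update v y b₀) (.mu x p) := by
    rw [ha₀, eval_subst h, hb₀]
  have hcomm : ∀ (a b : C),
      Function.update (Function.update v y b) x a
        = Function.update (Function.update v x a) y b := fun a b =>
    Function.update_comm (Ne.symm hxy) b a v
  have humono : ∀ (f : X → C) (w : X) (c c' : C), c ≤ c' →
      ∀ z, Function.update f w c z ≤ Function.update f w c' z := by
    intro f w c c' hcc z
    by_cases hzw : z = w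
    · subst hzw; simpa using hcc
    · simp [Function.update_apply, if_neg hzw]
  constructor
  · refine ⟨?_, ?_⟩
    · have h1 := (h.mu (Function.update v y b₀) x p).1
      simp only [Set.mem_setOf_eq] at h1
      show eval (Function.update (Function.update v x a₀) y b₀) p ≤ a₀
      rw [← hcomm, ha₀']
      exact h1
    · have h2 := (h.mu v y q').1
      simp only [Set.mem_setOf_eq] at h2
      rw [← hb₀, hq', eval_subst h, ← ha₀'] at h2
      show eval (Function.update (Function.update v x a₀) y b₀) q ≤ b₀
      rw [← hcomm]
      exact h2
  · rintro ⟨a, b⟩ ⟨h1, h2⟩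
    simp only at h1 h2
    have hA : eval (Function.update v y b) (.mu x p) ≤ a := by
      refine (h.mu (Function.update v y b) x p).2 ?_
      simp only [Set.mem_setOf_eq]
      rw [hcomm]; exact h1
    have hB : b₀ ≤ b := by
      rw [hb₀]
      refine (h.mu v y q').2 ?_
      simp only [Set.mem_setOf_eq]
      rw [hq', eval_subst h]
      refine le_trans (eval_mono h q _ (Function.update (Function.update v y b) x a)
        (humono _ x _ a hA)) ?_
      rw [hcomm]; exact h2
    have hA0 : a₀ ≤ a := by
      rw [ha₀']
      refine le_trans (eval_mono h _ (Function.update v y b₀) (Function.update v y b) ?_) hA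
      exact humono _ y _ b hB
    exact ⟨hA0, hB⟩
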